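/- Let A be a finite nonempty set of positive integers and let τ = τ₀-φ be a POP whose first block τ₀ is a nonempty consecutive pattern, where φ is an arbitrary POP and every letter of τ₀ is incomparable with every letter of φ. Then in ℚ⟦x,y⟧: C_τ^A(x,y) = C_{τ₀}^A(x,y) + C_φ^A(x,y)·D_{τ₀}^A(x,y). -/

import Mathlib

/-- A composition of `n` with `m` parts, all parts in `A`. -/
def IsCompOf (A : Finset ℕ) (n m : ℕ) (σ : List ℕ) : Prop :=
  (∀ x ∈ σ, x ∈ A) ∧ σ.sum = n ∧ σ.length = m

/-- A partially ordered pattern (POP) over an alphabet `α`: a word partitioned into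
`r` consecutive blocks, the `i`-th block having length `len i` and letters
`letters i`. -/
structure POP (α : Type*) where
  r : ℕ
  len : Fin r → ℕ
  letters : (i : Fin r) → Fin (len i) → α

/-- The POP `P` occurs in the composition `σ`: there are contiguous factors of `σ`,
one for each block (the `i`-th starting at `st i`), each ending strictly before the
next begins, such that the letters of `σ` matched to the letters of the pattern
respect all strict inequalities and equalities of the alphabet. -/
def POPOccurs {α : Type*} [PartialOrder α] (P : POP α) (σ : List ℕ) : Prop :=
  ∃ st : Fin P.r → ℕ,
    (∀ i : Fin P.r, st i + P.len i ≤ σ.length) ∧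
    (∀ i j : Fin P.r, i < j → st i + P.len i ≤ st j) ∧
    ∀ (i j : Fin P.r) (s : Fin (P.len i)) (t : Fin (P.len j)),
      (P.letters i s < P.letters j t →
        σ.getD (st i + s) 0 < σ.getD (st j + t) 0) ∧
      (P.letters i s = P.letters j t →
        σ.getD (st i + s) 0 = σ.getD (st j + t) 0)

/-- An occurrence, starting at position `i`, of the consecutive pattern
`p : Fin ℓ → β` in `σ`. -/
def OccAt {β : Type*} [PartialOrder β] {ℓ : ℕ} (p : Fin ℓ → β)
    (σ : List ℕ) (i : ℕ) : Prop :=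
  i + ℓ ≤ σ.length ∧ ∀ s t : Fin ℓ,
    (p s < p t → σ.getD (i + s) 0 < σ.getD (i + t) 0) ∧
    (p s = p t → σ.getD (i + s) 0 = σ.getD (i + t) 0)

/-- `σ` quasi-avoids the consecutive pattern `p`: it has exactly one occurrence of
`p`, consisting of the `ℓ` rightmost letters of `σ`. -/
def QuasiAvoidsPat {β : Type*} [PartialOrder β] {ℓ : ℕ} (p : Fin ℓ → β)
    (σ : List ℕ) : Prop :=
  {i : ℕ | OccAt p σ i} = {σ.length - ℓ}

/-- An occurrence of the POP `τ₀-φ` in `σ`, where the consecutive pattern `τ₀` and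
the POP `φ` have mutually incomparable letters: an occurrence of `τ₀` as a
contiguous factor, ending strictly before the start of an occurrence of `φ` in the
remaining suffix of `σ`. -/
def DashOccurs {β α : Type*} [PartialOrder β] [PartialOrder α] {ℓ : ℕ}
    (p : Fin ℓ → β) (P : POP α) (σ : List ℕ) : Prop :=
  ∃ i : ℕ, OccAt p σ i ∧ POPOccurs P (σ.drop (i + ℓ))

private lemma finsupp_decomp (d : Fin 2 →₀ ℕ) :
    d = Finsupp.single 0 (d 0) + Finsupp.single 1 (d 1) := by
  ext a; fin_cases a <;> simp [Finsupp.single_apply]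
section AuxLemmas

variable {β α : Type*} [PartialOrder β] [PartialOrder α] {ℓ : ℕ}

private lemma getD_take' (σ : List ℕ) {j k : ℕ} (h : j < k) :
    (σ.take k).getD j 0 = σ.getD j 0 := by
  simp [List.getD_eq_getElem?_getD, List.getElem?_take_of_lt h]

private lemma occAt_of_take {p : Fin ℓ → β} {σ : List ℕ} {i k : ℕ}
    (h : OccAt p (σ.take k) i) : OccAt p σ i := by
  obtain ⟨h1, h2⟩ := h
  rw [List.length_take] at h1
  refine ⟨by omega, fun s t => ?_⟩
  have hs : i + (s : ℕ) < k := by have := s.2; omega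
  have ht : i + (t : ℕ) < k := by have := t.2; omega
  have e2 := h2 s t
  rwa [getD_take' σ hs, getD_take' σ ht] at e2

private lemma occAt_take {p : Fin ℓ → β} {σ : List ℕ} {i k : ℕ}
    (hk : k ≤ σ.length) (hik : i + ℓ ≤ k) (h : OccAt p σ i) :
    OccAt p (σ.take k) i := by
  obtain ⟨h1, h2⟩ := h
  refine ⟨by rw [List.length_take]; omega, fun s t => ?_⟩
  have hs : i + (s : ℕ) < k := by have := s.2; omega
  have ht : i + (t : ℕ) < k := by have := t.2; omega
  have e2 := h2 s t
  rwa [← getD_take' σ hs, ← getD_take' σ ht] at e2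

private lemma occAt_append_of {p : Fin ℓ → β} {π ρ : List ℕ} {i : ℕ}
    (h : OccAt p π i) : OccAt p (π ++ ρ) i := by
  apply occAt_of_take (k := π.length)
  rwa [List.take_left]

private lemma occAt_append_to {p : Fin ℓ → β} {π ρ : List ℕ} {i : ℕ}
    (h : OccAt p (π ++ ρ) i) (hik : i + ℓ ≤ π.length) : OccAt p π i := by
  have := occAt_take (k := π.length) (by simp) hik h
  rwa [List.take_left] at this

private lemma popOccurs_of_drop {P : POP α} {l : List ℕ} {t : ℕ}
    (ht : t ≤ l.length) (h : POPOccurs P (l.drop t)) : POPOccurs P l := by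
  obtain ⟨st, h1, h2, h3⟩ := h
  refine ⟨fun i => t + st i, fun i => ?_, fun i j hij => ?_, fun i j s u => ?_⟩
  · show t + st i + P.len i ≤ l.length
    have := h1 i; rw [List.length_drop] at this; omega
  · show t + st i + P.len i ≤ t + st j
    have := h2 i j hij; omega
  · have e : ∀ (i' : Fin P.r) (s' : Fin (P.len i')),
        l.getD (t + st i' + (s' : ℕ)) 0 = (l.drop t).getD (st i' + (s' : ℕ)) 0 := by
      intro i' s'
      rw [Nat.add_assoc]
      simp [List.getD_eq_getElem?_getD, List.getElem?_drop]
    rw [e i s, e j u]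
    exact h3 i j s u

private lemma quasi_basic {p : Fin ℓ → β} {π : List ℕ} (h : QuasiAvoidsPat p π) :
    ℓ ≤ π.length ∧ OccAt p π (π.length - ℓ) := by
  have hm : OccAt p π (π.length - ℓ) := by
    have : (π.length - ℓ) ∈ {i : ℕ | OccAt p π i} := by rw [h]; rfl
    exact this
  exact ⟨by have := hm.1; omega, hm⟩

/-- Split lemma: properties of `π ++ ρ` when `π` quasi-avoids `τ₀` and `ρ` avoids `φ`. -/
private lemma split_props (τ₀ : Fin ℓ → β) (φ : POP α) {π ρ : List ℕ}
    (hq : QuasiAvoidsPat τ₀ π) (hφ : ¬ POPOccurs φ ρ) :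
    (¬ DashOccurs τ₀ φ (π ++ ρ)) ∧
    OccAt τ₀ (π ++ ρ) (π.length - ℓ) ∧
    (∀ i, OccAt τ₀ (π ++ ρ) i → π.length - ℓ ≤ i) := by
  obtain ⟨hl, hocc⟩ := quasi_basic hq
  have honly : ∀ i, OccAt τ₀ (π ++ ρ) i → i + ℓ ≤ π.length → i = π.length - ℓ := by
    intro i hi hik
    have : OccAt τ₀ π i := occAt_append_to hi hik
    have : i ∈ {j : ℕ | OccAt τ₀ π j} := this
    rw [hq] at this
    exact this
  have hoccσ : OccAt τ₀ (π ++ ρ) (π.length - ℓ) := occAt_append_of hocc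
  refine ⟨?_, hoccσ, ?_⟩
  · rintro ⟨i, hi, hpop⟩
    have hilen : i + ℓ ≤ π.length + ρ.length := by
      have := hi.1; rwa [List.length_append] at this
    by_cases hc : i + ℓ ≤ π.length
    · have hie := honly i hi hc
      have : i + ℓ = π.length := by omega
      rw [this, List.drop_left] at hpop
      exact hφ hpop
    · have hiz : i + ℓ = π.length + (i + ℓ - π.length) := by omega
      rw [hiz, ← List.drop_drop, List.drop_left] at hpop
      exact hφ (popOccurs_of_drop (by omega) hpop)
  · intro i hi
    by_contra hlt
    push_neg at hlt
    have : i + ℓ ≤ π.length := by omega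
    have := honly i hi this
    omega

/-- Decomposition lemma: if `σ` avoids the dashed pattern but contains `τ₀`, then
cutting after the leftmost occurrence of `τ₀` yields a quasi-avoider and a `φ`-avoider. -/
private lemma decomp_props (τ₀ : Fin ℓ → β) (φ : POP α) {σ : List ℕ}
    (hnd : ¬ DashOccurs τ₀ φ σ) (hex : ∃ i, OccAt τ₀ σ i) :
    QuasiAvoidsPat τ₀ (σ.take (sInf {i | OccAt τ₀ σ i} + ℓ)) ∧
    ¬ POPOccurs φ (σ.drop (sInf {i | OccAt τ₀ σ i} + ℓ)) := by
  set i₀ := sInf {i | OccAt τ₀ σ i} with hi₀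
  have h0 : OccAt τ₀ σ i₀ := Nat.sInf_mem hex
  have hk : i₀ + ℓ ≤ σ.length := h0.1
  constructor
  · have hlen : (σ.take (i₀ + ℓ)).length = i₀ + ℓ := by
      rw [List.length_take]; omega
    unfold QuasiAvoidsPat
    rw [hlen]
    ext j
    simp only [Set.mem_setOf_eq, Set.mem_singleton_iff]
    constructor
    · intro hj
      have hj' : OccAt τ₀ σ j := occAt_of_take hj
      have hj2 : j + ℓ ≤ i₀ + ℓ := by
        have := hj.1; rwa [hlen] at this
      have hge : i₀ ≤ j := Nat.sInf_le hj'
      omega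
    · intro hj
      subst hj
      have : i₀ + ℓ - ℓ = i₀ := by omega
      rw [this]
      exact occAt_take (by omega) (le_refl _) h0
  · intro hpop
    exact hnd ⟨i₀, h0, hpop⟩

private lemma comp_finite (A : Finset ℕ) (m : ℕ) :
    {σ : List ℕ | (∀ x ∈ σ, x ∈ A) ∧ σ.length ≤ m}.Finite := by
  have hsub : {σ : List ℕ | (∀ x ∈ σ, x ∈ A) ∧ σ.length ≤ m}
      ⊆ (fun l : List A => l.map Subtype.val) '' {l : List A | l.length ≤ m} := by
    rintro σ ⟨h1, h2⟩
    exact ⟨σ.attach.map (fun x => ⟨x.1, h1 x.1 x.2⟩), by simpa using h2, by simp⟩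
  exact ((List.finite_length_le _ m).image _).subset hsub

end AuxLemmas

private lemma key {β α : Type*} [PartialOrder β] [PartialOrder α] {ℓ : ℕ}
    (τ₀ : Fin ℓ → β) (φ : POP α) (A : Finset ℕ) (d : Fin 2 →₀ ℕ) :
    {σ : List ℕ | IsCompOf A (d 0) (d 1) σ ∧ ¬ DashOccurs τ₀ φ σ}.ncard
      = {σ : List ℕ | IsCompOf A (d 0) (d 1) σ ∧ ∀ i, ¬ OccAt τ₀ σ i}.ncard
      + ∑ x ∈ Finset.HasAntidiagonal.antidiagonal d,
          {σ : List ℕ | IsCompOf A (x.1 0) (x.1 1) σ ∧ ¬ POPOccurs φ σ}.ncard *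
          {σ : List ℕ | IsCompOf A (x.2 0) (x.2 1) σ ∧ QuasiAvoidsPat τ₀ σ}.ncard := by
  classical
  set n := d 0 with hn
  set m := d 1 with hm
  have hd' : d = Finsupp.single 0 n + Finsupp.single 1 m := finsupp_decomp d
  have hW := comp_finite A m
  have hfin' : ∀ (n' m' : ℕ) (Q : List ℕ → Prop),
      {σ : List ℕ | IsCompOf A n' m' σ ∧ Q σ}.Finite := fun n' m' Q =>
    (comp_finite A m').subset (by rintro σ ⟨⟨h1, _, h3⟩, _⟩; exact ⟨h1, le_of_eq h3⟩)
  -- split S into T ∪ U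
  have hsplit : {σ : List ℕ | IsCompOf A n m σ ∧ ¬ DashOccurs τ₀ φ σ}
      = {σ : List ℕ | IsCompOf A n m σ ∧ ∀ i, ¬ OccAt τ₀ σ i}
        ∪ {σ : List ℕ | IsCompOf A n m σ ∧ ¬ DashOccurs τ₀ φ σ ∧ ∃ i, OccAt τ₀ σ i} := by
    ext σ
    simp only [Set.mem_setOf_eq, Set.mem_union]
    constructor
    · rintro ⟨hc, hnd⟩
      by_cases hx : ∃ i, OccAt τ₀ σ i
      · exact Or.inr ⟨hc, hnd, hx⟩
      · push_neg at hx; exact Or.inl ⟨hc, hx⟩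
    · rintro (⟨hc, hav⟩ | ⟨hc, hnd, _⟩)
      · exact ⟨hc, fun ⟨i, hi, _⟩ => hav i hi⟩
      · exact ⟨hc, hnd⟩
  have hdisj : Disjoint {σ : List ℕ | IsCompOf A n m σ ∧ ∀ i, ¬ OccAt τ₀ σ i}
      {σ : List ℕ | IsCompOf A n m σ ∧ ¬ DashOccurs τ₀ φ σ ∧ ∃ i, OccAt τ₀ σ i} := by
    rw [Set.disjoint_left]
    rintro σ ⟨_, hav⟩ ⟨_, _, i, hi⟩
    exact hav i hi
  rw [hsplit, Set.ncard_union_eq hdisj (hfin' n m _) (hfin' n m _)]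
  congr 1
  -- the set of pairs
  set V : Set (List ℕ × List ℕ) := {pr | (∀ x ∈ pr.1, x ∈ A) ∧ (∀ x ∈ pr.2, x ∈ A) ∧
      ¬ POPOccurs φ pr.1 ∧ QuasiAvoidsPat τ₀ pr.2 ∧
      pr.2.sum + pr.1.sum = n ∧ pr.2.length + pr.1.length = m} with hVdef
  have hVfin : V.Finite := by
    refine (hW.prod hW).subset ?_
    rintro ⟨ρ, π⟩ ⟨hA1, hA2, _, _, _, hlen⟩
    exact ⟨⟨hA1, by omega⟩, hA2, by omega⟩
  -- image of V under concatenation is U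
  have himg : (fun pr : List ℕ × List ℕ => pr.2 ++ pr.1) '' V
      = {σ : List ℕ | IsCompOf A n m σ ∧ ¬ DashOccurs τ₀ φ σ ∧ ∃ i, OccAt τ₀ σ i} := by
    ext σ
    constructor
    · rintro ⟨⟨ρ, π⟩, ⟨hA1, hA2, hφρ, hqπ, hsum, hlen⟩, rfl⟩
      obtain ⟨hnd, hocc, _⟩ := split_props τ₀ φ hqπ hφρ
      refine ⟨⟨?_, ?_, ?_⟩, hnd, ⟨π.length - ℓ, hocc⟩⟩
      · intro x hx
        rcases List.mem_append.1 hx with h | h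
        exacts [hA2 x h, hA1 x h]
      · rw [List.sum_append]; exact hsum
      · rw [List.length_append]; exact hlen
    · rintro ⟨⟨hA0, hsum, hlen⟩, hnd, hex⟩
      obtain ⟨hq, hφ'⟩ := decomp_props τ₀ φ hnd hex
      have hk : sInf {i | OccAt τ₀ σ i} + ℓ ≤ σ.length := (Nat.sInf_mem hex).1
      refine ⟨(σ.drop (sInf {i | OccAt τ₀ σ i} + ℓ), σ.take (sInf {i | OccAt τ₀ σ i} + ℓ)),
        ⟨?_, ?_, hφ', hq, ?_, ?_⟩, List.take_append_drop _ _⟩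
      · intro x hx; exact hA0 x (List.drop_subset _ _ hx)
      · intro x hx; exact hA0 x (List.take_subset _ _ hx)
      · rw [← List.sum_append, List.take_append_drop]; exact hsum
      · rw [← List.length_append, List.take_append_drop]; exact hlen
  have hinj : Set.InjOn (fun pr : List ℕ × List ℕ => pr.2 ++ pr.1) V := by
    rintro ⟨ρ₁, π₁⟩ ⟨hA1, hA2, hφ1, hq1, -, -⟩ ⟨ρ₂, π₂⟩ ⟨hB1, hB2, hφ2, hq2, -, -⟩ heq
    simp only at heq
    have hlen : π₁.length = π₂.length := by
      obtain ⟨hl1, -⟩ := quasi_basic hq1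
      obtain ⟨hl2, -⟩ := quasi_basic hq2
      obtain ⟨-, ho1, hm1⟩ := split_props τ₀ φ hq1 hφ1
      obtain ⟨-, ho2, hm2⟩ := split_props τ₀ φ hq2 hφ2
      rw [heq] at ho1 hm1
      have h12 := hm2 _ ho1
      have h21 := hm1 _ ho2
      dsimp only at h12 h21 hl1 hl2
      omega
    obtain ⟨h2, h1⟩ := List.append_inj heq hlen
    simp [Prod.ext_iff, h1, h2]
  rw [← himg, Set.ncard_image_of_injOn hinj]
  -- now count V fiberwise over the antidiagonal
  rw [Set.ncard_eq_toFinset_card V hVfin]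
  set G : List ℕ × List ℕ → (Fin 2 →₀ ℕ) × (Fin 2 →₀ ℕ) := fun pr =>
    ((Finsupp.single 0 pr.1.sum + Finsupp.single 1 pr.1.length : Fin 2 →₀ ℕ),
     (Finsupp.single 0 pr.2.sum + Finsupp.single 1 pr.2.length : Fin 2 →₀ ℕ)) with hGdef
  have hmapsto : ∀ pr ∈ hVfin.toFinset, G pr ∈ Finset.HasAntidiagonal.antidiagonal d := by
    intro pr hpr
    rw [Set.Finite.mem_toFinset] at hpr
    obtain ⟨-, -, -, -, hsum, hlen⟩ := hpr
    rw [Finset.HasAntidiagonal.mem_antidiagonal, hd', ← hsum, ← hlen]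
    show Finsupp.single 0 pr.1.sum + Finsupp.single 1 pr.1.length
        + (Finsupp.single 0 pr.2.sum + Finsupp.single 1 pr.2.length) = _
    rw [Finsupp.single_add, Finsupp.single_add]
    abel
  rw [Finset.card_eq_sum_card_fiberwise hmapsto]
  refine Finset.sum_congr rfl fun x hx => ?_
  rw [Finset.HasAntidiagonal.mem_antidiagonal] at hx
  have hfib : (hVfin.toFinset.filter fun pr => G pr = x)
      = (hfin' (x.1 0) (x.1 1) (fun σ => ¬ POPOccurs φ σ)).toFinset
          ×ˢ (hfin' (x.2 0) (x.2 1) (fun σ => QuasiAvoidsPat τ₀ σ)).toFinset := by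
    ext pr
    rw [Finset.mem_filter, Finset.mem_product, Set.Finite.mem_toFinset,
      Set.Finite.mem_toFinset, Set.Finite.mem_toFinset]
    constructor
    · rintro ⟨⟨hA1, hA2, hφ1, hq2, hsum, hlen⟩, hG⟩
      have hx1 : x.1 = Finsupp.single 0 pr.1.sum + Finsupp.single 1 pr.1.length :=
        (congrArg Prod.fst hG).symm
      have hx2 : x.2 = Finsupp.single 0 pr.2.sum + Finsupp.single 1 pr.2.length :=
        (congrArg Prod.snd hG).symm
      have e10 : x.1 0 = pr.1.sum := by rw [hx1]; simp
      have e11 : x.1 1 = pr.1.length := by rw [hx1]; simp [Finsupp.single_apply]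
      have e20 : x.2 0 = pr.2.sum := by rw [hx2]; simp
      have e21 : x.2 1 = pr.2.length := by rw [hx2]; simp [Finsupp.single_apply]
      exact ⟨⟨⟨hA1, e10.symm, e11.symm⟩, hφ1⟩, ⟨hA2, e20.symm, e21.symm⟩, hq2⟩
    · rintro ⟨⟨⟨hA1, hs1, hl1⟩, hφ1⟩, ⟨hA2, hs2, hl2⟩, hq2⟩
      have hdx : (x.1 + x.2) 0 = n ∧ (x.1 + x.2) 1 = m := by
        rw [hx]; exact ⟨rfl, rfl⟩
      obtain ⟨hdx0, hdx1⟩ := hdx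
      rw [Finsupp.add_apply] at hdx0 hdx1
      refine ⟨⟨hA1, hA2, hφ1, hq2, by omega, by omega⟩, ?_⟩
      have e1 : Finsupp.single (0 : Fin 2) pr.1.sum + Finsupp.single 1 pr.1.length = x.1 := by
        rw [hs1, hl1]; exact (finsupp_decomp x.1).symm
      have e2 : Finsupp.single (0 : Fin 2) pr.2.sum + Finsupp.single 1 pr.2.length = x.2 := by
        rw [hs2, hl2]; exact (finsupp_decomp x.2).symm
      show (_, _) = x
      rw [Prod.ext_iff]
      exact ⟨e1, e2⟩
  rw [hfib, Finset.card_product, Set.ncard_eq_toFinset_card _ (hfin' (x.1 0) (x.1 1) _),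
    Set.ncard_eq_toFinset_card _ (hfin' (x.2 0) (x.2 1) _)]

open MvPowerSeries in
theorem stmt4 {β α : Type*} [PartialOrder β] [PartialOrder α]
    {ℓ : ℕ} (hℓ : 0 < ℓ) (τ₀ : Fin ℓ → β) (φ : POP α)
    (A : Finset ℕ) (hA : A.Nonempty) (hpos : ∀ a ∈ A, 0 < a)
    (Cτ C₀ Cφ D₀ : MvPowerSeries (Fin 2) ℚ)
    (hCτ : ∀ n m : ℕ,
      (MvPowerSeries.coeff (Finsupp.single 0 n + Finsupp.single 1 m)) Cτ
        = (Set.ncard {σ : List ℕ | IsCompOf A n m σ ∧ ¬ DashOccurs τ₀ φ σ} : ℚ))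
    (hC₀ : ∀ n m : ℕ,
      (MvPowerSeries.coeff (Finsupp.single 0 n + Finsupp.single 1 m)) C₀
        = (Set.ncard {σ : List ℕ | IsCompOf A n m σ ∧ ∀ i, ¬ OccAt τ₀ σ i} : ℚ))
    (hCφ : ∀ n m : ℕ,
      (MvPowerSeries.coeff (Finsupp.single 0 n + Finsupp.single 1 m)) Cφ
        = (Set.ncard {σ : List ℕ | IsCompOf A n m σ ∧ ¬ POPOccurs φ σ} : ℚ))
    (hD₀ : ∀ n m : ℕ,
      (MvPowerSeries.coeff (Finsupp.single 0 n + Finsupp.single 1 m)) D₀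
        = (Set.ncard {σ : List ℕ | IsCompOf A n m σ ∧ QuasiAvoidsPat τ₀ σ} : ℚ)) :
    Cτ = C₀ + Cφ * D₀ := by
    classical
  apply MvPowerSeries.ext
  intro d
  have hd : d = Finsupp.single 0 (d 0) + Finsupp.single 1 (d 1) := finsupp_decomp d
  have e1 := hCτ (d 0) (d 1); rw [← hd] at e1
  have e2 := hC₀ (d 0) (d 1); rw [← hd] at e2
  rw [map_add, MvPowerSeries.coeff_mul, e1, e2]
  have e3 : ∀ x ∈ Finset.HasAntidiagonal.antidiagonal d,
      (MvPowerSeries.coeff x.1) Cφ * (MvPowerSeries.coeff x.2) D₀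
        = ({σ : List ℕ | IsCompOf A (x.1 0) (x.1 1) σ ∧ ¬ POPOccurs φ σ}.ncard : ℚ)
          * ({σ : List ℕ | IsCompOf A (x.2 0) (x.2 1) σ ∧ QuasiAvoidsPat τ₀ σ}.ncard : ℚ) := by
    intro x _
    have a1 := hCφ (x.1 0) (x.1 1); rw [← finsupp_decomp x.1] at a1
    have a2 := hD₀ (x.2 0) (x.2 1); rw [← finsupp_decomp x.2] at a2
    rw [a1, a2]
  rw [Finset.sum_congr rfl e3, key τ₀ φ A d]
  push_cast
  ring
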